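/- arXiv:2511.17371 — 2 statements merged into one kernel-verified Lean document; each statement's English description precedes it below -/
import Mathlib

section
/- In the symplectic group Sp(2n,ℂ) defined by the antidiagonal symplectic form M_{2n}, let P_I be the standard maximal parabolic corresponding to an isotropic subspace of dimension l (1 ≤ l ≤ n). For an element M_{a,b,c,d} of P_I with Levi data a ∈ GL(l,ℂ) and d ∈ Sp(2n-2l,ℂ), the determinant of the adjoint action of M_{a,b,c,d} on Lie(Sp(2n,ℂ))/Lie(P_I) equals det(a)^{-(2n-2l)}·det(d)^{l}·det(a)^{-(l+1)}. In particular, when l = n (the Lagrangian case) it equals det(a)^{-(n+1)}. -/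
open Matrix

/-- The `l × l` antidiagonal identity matrix `K_l`. -/
noncomputable def Kmat (l : ℕ) : Matrix (Fin l) (Fin l) ℂ :=
  fun i j => if (i : ℕ) + (j : ℕ) = l - 1 then 1 else 0

/-- The `m × m` antidiagonal symplectic form `M_m = ((0, K_{m/2}), (-K_{m/2}, 0))`
(for even `m`), written entrywise: the antidiagonal entries are `1` in the top half and
`-1` in the bottom half. -/
noncomputable def Mmat (m : ℕ) : Matrix (Fin m) (Fin m) ℂ :=
  fun i j => if (i : ℕ) + (j : ℕ) = m - 1 then (if 2 * (i : ℕ) < m then 1 else -1) else 0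

/-- The subspace `W = {B ∈ Mat(l×l, ℂ) : K_l B = Bᵀ K_l}` of dimension `l(l+1)/2`. -/
noncomputable def Wsub (l : ℕ) : Submodule ℂ (Matrix (Fin l) (Fin l) ℂ) where
  carrier := {B | Kmat l * B = Bᵀ * Kmat l}
  add_mem' := by
    intro a b ha hb
    simp only [Set.mem_setOf_eq] at *
    rw [Matrix.mul_add, Matrix.transpose_add, Matrix.add_mul, ha, hb]
  zero_mem' := by simp
  smul_mem' := by
    intro c a ha
    simp only [Set.mem_setOf_eq] at *
    rw [Matrix.mul_smul, Matrix.transpose_smul, Matrix.smul_mul, ha]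

open Polynomial


theorem det_one_add_of_isNilpotent {ι : Type*} [DecidableEq ι] [Fintype ι]
    (A : Matrix ι ι ℂ) (hA : IsNilpotent A) : (1 + A).det = 1 := by
  obtain ⟨k, hk⟩ := hA
  set P : ℂ[X] := ((1 : Matrix ι ι ℂ[X]) + (X : ℂ[X]) • A.map C).det with hP
  have heval : ∀ t : ℂ, P.eval t = ((1 : Matrix ι ι ℂ) + t • A).det := by
    intro t
    have h := RingHom.map_det (evalRingHom t) ((1 : Matrix ι ι ℂ[X]) + (X : ℂ[X]) • A.map C)
    have h2 : ((1 : Matrix ι ι ℂ[X]) + (X : ℂ[X]) • A.map C).map (evalRingHom t)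
        = (1 : Matrix ι ι ℂ) + t • A := by
      ext i j
      by_cases hij : i = j <;>
        simp [Matrix.map_apply, Matrix.add_apply, Matrix.smul_apply, Matrix.one_apply, hij,
          smul_eq_mul] <;> ring
    rw [show (evalRingHom t).mapMatrix ((1 : Matrix ι ι ℂ[X]) + (X : ℂ[X]) • A.map C)
        = ((1 : Matrix ι ι ℂ[X]) + (X : ℂ[X]) • A.map C).map (evalRingHom t) from rfl, h2] at h
    simpa using h
  have hne : ∀ t : ℂ, P.eval t ≠ 0 := by
    intro t
    rw [heval]
    have hnil : IsNilpotent (t • A) := ⟨k, by rw [_root_.smul_pow, hk, smul_zero]⟩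
    exact ((Matrix.isUnit_iff_isUnit_det _).mp hnil.isUnit_one_add).ne_zero
  have hdeg : P.degree ≤ 0 := by
    by_contra h
    obtain ⟨t, ht⟩ := Complex.exists_root (lt_of_not_ge h)
    exact hne t ht
  have hPC := Polynomial.eq_C_of_degree_le_zero hdeg
  have h0 := heval 0
  have h1 := heval 1
  rw [hPC] at h0 h1
  simp only [eval_C] at h0 h1
  simp only [zero_smul, add_zero, Matrix.det_one] at h0
  rw [one_smul] at h1
  rw [← h1, h0]

theorem linmap_det_one_add_of_isNilpotent {V : Type*} [AddCommGroup V] [Module ℂ V]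
    [FiniteDimensional ℂ V] (f : V →ₗ[ℂ] V) (hf : IsNilpotent f) :
    LinearMap.det (LinearMap.id + f) = 1 := by
  let b := Module.finBasis ℂ V
  rw [← LinearMap.det_toMatrix b]
  have h1 : LinearMap.toMatrix b b (LinearMap.id + f) = 1 + LinearMap.toMatrix b b f := by
    rw [map_add, LinearMap.toMatrix_id]
  rw [h1]
  apply det_one_add_of_isNilpotent
  have : LinearMap.toMatrix b b f = LinearMap.toMatrixAlgEquiv b f := rfl
  rw [this]
  exact hf.map (LinearMap.toMatrixAlgEquiv b)


theorem det_of_scaling {ι : Type*} [Fintype ι] [DecidableEq ι] (w : ι → ℂ)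
    (f : (ι → ℂ) →ₗ[ℂ] (ι → ℂ)) (hf : ∀ v i, f v i = w i * v i) :
    LinearMap.det f = ∏ i, w i := by
  rw [← LinearMap.det_toMatrix (Pi.basisFun ℂ ι)]
  have h : LinearMap.toMatrix (Pi.basisFun ℂ ι) (Pi.basisFun ℂ ι) f = Matrix.diagonal w := by
    ext i j
    rw [LinearMap.toMatrix_apply]
    simp only [Pi.basisFun_apply, Pi.basisFun_repr, hf]
    by_cases hij : i = j <;> simp [Pi.single_apply, Matrix.diagonal, hij]
  rw [h, Matrix.det_diagonal]

theorem det_triangular {Xs Ys : Type*} [AddCommGroup Xs] [Module ℂ Xs] [AddCommGroup Ys]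
    [Module ℂ Ys] [FiniteDimensional ℂ Xs] [FiniteDimensional ℂ Ys]
    (f : Xs × Ys →ₗ[ℂ] Xs × Ys) (hf : ∀ x : Xs, (f (x, 0)).2 = 0) :
    LinearMap.det f = LinearMap.det (LinearMap.fst ℂ Xs Ys ∘ₗ f ∘ₗ LinearMap.inl ℂ Xs Ys) *
      LinearMap.det (LinearMap.snd ℂ Xs Ys ∘ₗ f ∘ₗ LinearMap.inr ℂ Xs Ys) := by
  classical
  let bX := Module.finBasis ℂ Xs
  let bY := Module.finBasis ℂ Ys
  set g := LinearMap.fst ℂ Xs Ys ∘ₗ f ∘ₗ LinearMap.inl ℂ Xs Ys with hg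
  set k := LinearMap.snd ℂ Xs Ys ∘ₗ f ∘ₗ LinearMap.inr ℂ Xs Ys with hk
  rw [← LinearMap.det_toMatrix (bX.prod bY) f, ← LinearMap.det_toMatrix bX g,
    ← LinearMap.det_toMatrix bY k]
  have hmat : LinearMap.toMatrix (bX.prod bY) (bX.prod bY) f =
      Matrix.fromBlocks (LinearMap.toMatrix bX bX g)
        (Matrix.of fun i j => bX.repr (f (0, bY j)).1 i) 0 (LinearMap.toMatrix bY bY k) := by
    ext i j
    rcases i with i | i <;> rcases j with j | j <;>
      simp only [LinearMap.toMatrix_apply, Matrix.fromBlocks_apply₁₁, Matrix.fromBlocks_apply₁₂,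
        Matrix.fromBlocks_apply₂₁, Matrix.fromBlocks_apply₂₂, Module.Basis.prod_repr_inl,
        Module.Basis.prod_repr_inr, Matrix.of_apply, Matrix.zero_apply, hg, hk,
        LinearMap.comp_apply, LinearMap.inl_apply, LinearMap.inr_apply, LinearMap.fst_apply,
        LinearMap.snd_apply]
    · congr 2
      have h1 : bX.prod bY (Sum.inl j) = (bX j, 0) :=
        Prod.ext (Module.Basis.prod_apply_inl_fst _ _ _) (Module.Basis.prod_apply_inl_snd _ _ _)
      rw [h1]
    · have h1 : bX.prod bY (Sum.inr j) = (0, bY j) :=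
        Prod.ext (Module.Basis.prod_apply_inr_fst _ _ _) (Module.Basis.prod_apply_inr_snd _ _ _)
      rw [h1]
    · have h1 : bX.prod bY (Sum.inl j) = (bX j, 0) :=
        Prod.ext (Module.Basis.prod_apply_inl_fst _ _ _) (Module.Basis.prod_apply_inl_snd _ _ _)
      rw [h1, hf (bX j), map_zero]
      rfl
    · have h1 : bX.prod bY (Sum.inr j) = (0, bY j) :=
        Prod.ext (Module.Basis.prod_apply_inr_fst _ _ _) (Module.Basis.prod_apply_inr_snd _ _ _)
      rw [h1]
  rw [hmat, Matrix.det_fromBlocks_zero₂₁]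

noncomputable def rightMulLin {r s : ℕ} (Q : Matrix (Fin s) (Fin s) ℂ) :
    Matrix (Fin r) (Fin s) ℂ →ₗ[ℂ] Matrix (Fin r) (Fin s) ℂ where
  toFun X := X * Q
  map_add' X Y := Matrix.add_mul X Y Q
  map_smul' c X := Matrix.smul_mul c X Q

noncomputable def leftMulLin {r s : ℕ} (P : Matrix (Fin r) (Fin r) ℂ) :
    Matrix (Fin r) (Fin s) ℂ →ₗ[ℂ] Matrix (Fin r) (Fin s) ℂ where
  toFun X := P * X
  map_add' X Y := Matrix.mul_add P X Y
  map_smul' c X := Matrix.mul_smul P c X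

noncomputable def mcoord (r s : ℕ) : Matrix (Fin r) (Fin s) ℂ ≃ₗ[ℂ] (Fin r × Fin s → ℂ) where
  toFun X p := X p.1 p.2
  invFun c := Matrix.of fun i j => c (i, j)
  map_add' _ _ := rfl
  map_smul' _ _ := rfl
  left_inv _ := rfl
  right_inv _ := rfl

theorem det_entrywise {r s : ℕ} (w : Fin r → Fin s → ℂ)
    (f : Matrix (Fin r) (Fin s) ℂ →ₗ[ℂ] Matrix (Fin r) (Fin s) ℂ)
    (hf : ∀ X i j, f X i j = w i j * X i j) :
    LinearMap.det f = ∏ i, ∏ j, w i j := by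
  rw [← LinearMap.det_conj f (mcoord r s)]
  rw [det_of_scaling (fun p => w p.1 p.2) _ (fun v p => by
    simp only [LinearMap.comp_apply, LinearEquiv.coe_coe]
    exact hf ((mcoord r s).symm v) p.1 p.2)]
  rw [← Fintype.prod_prod_type']

theorem det_rightMulLin {r s : ℕ} (Q : Matrix (Fin s) (Fin s) ℂ) (hQ : Q.det ≠ 0) :
    LinearMap.det (rightMulLin (r := r) Q) = Q.det ^ r := by
  apply Matrix.diagonal_transvection_induction_of_det_ne_zero _ Q hQ
  · intro δ _
    rw [det_entrywise (fun _ j => δ j) _ (fun X i j => (Matrix.mul_diagonal δ X i j).trans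
      (mul_comm _ _))]
    simp [Matrix.det_diagonal, Finset.prod_const]
  · intro t
    have hN : ∀ X : Matrix (Fin r) (Fin s) ℂ,
        (rightMulLin (r := r) (Matrix.single t.i t.j t.c)) ((rightMulLin (r := r)
          (Matrix.single t.i t.j t.c)) X) = 0 := by
      intro X
      show X * Matrix.single t.i t.j t.c * Matrix.single t.i t.j t.c = 0
      rw [Matrix.mul_assoc, Matrix.single_mul_single_of_ne (i := t.i) (j := t.j) (k := t.i) (h := Ne.symm t.hij) (d := t.c), Matrix.mul_zero]
    have heq : rightMulLin (r := r) t.toMatrix =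
        LinearMap.id + rightMulLin (r := r) (Matrix.single t.i t.j t.c) := by
      refine LinearMap.ext fun X => ?_
      show X * (1 + Matrix.single t.i t.j t.c) = _
      rw [Matrix.mul_add, Matrix.mul_one]
      rfl
    rw [heq, linmap_det_one_add_of_isNilpotent _ ⟨2, LinearMap.ext fun X => hN X⟩,
      Matrix.TransvectionStruct.det, one_pow]
  · intro A B _ _ hA hB
    have : rightMulLin (r := r) (A * B) = rightMulLin (r := r) B ∘ₗ rightMulLin (r := r) A := by
      refine LinearMap.ext fun X => ?_
      exact (Matrix.mul_assoc X A B).symm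
    rw [this, LinearMap.det_comp, hA, hB, Matrix.det_mul, mul_pow, mul_comm]

theorem det_leftMulLin {r s : ℕ} (P : Matrix (Fin r) (Fin r) ℂ) (hP : P.det ≠ 0) :
    LinearMap.det (leftMulLin (s := s) P) = P.det ^ s := by
  apply Matrix.diagonal_transvection_induction_of_det_ne_zero _ P hP
  · intro δ _
    rw [det_entrywise (fun i _ => δ i) _ (fun X i j => Matrix.diagonal_mul δ X i j)]
    simp [Matrix.det_diagonal, Finset.prod_const, ← Finset.prod_pow]
  · intro t
    have hN : ∀ X : Matrix (Fin r) (Fin s) ℂ,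
        (leftMulLin (s := s) (Matrix.single t.i t.j t.c)) ((leftMulLin (s := s)
          (Matrix.single t.i t.j t.c)) X) = 0 := by
      intro X
      show Matrix.single t.i t.j t.c * (Matrix.single t.i t.j t.c * X) = 0
      rw [← Matrix.mul_assoc, Matrix.single_mul_single_of_ne (i := t.i) (j := t.j) (k := t.i) (h := Ne.symm t.hij) (d := t.c), Matrix.zero_mul]
    have heq : leftMulLin (s := s) t.toMatrix =
        LinearMap.id + leftMulLin (s := s) (Matrix.single t.i t.j t.c) := by
      refine LinearMap.ext fun X => ?_
      show (1 + Matrix.single t.i t.j t.c) * X = _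
      rw [Matrix.add_mul, Matrix.one_mul]
      rfl
    rw [heq, linmap_det_one_add_of_isNilpotent _ ⟨2, LinearMap.ext fun X => hN X⟩,
      Matrix.TransvectionStruct.det, one_pow]
  · intro A B _ _ hA hB
    have : leftMulLin (s := s) (A * B) = leftMulLin (s := s) A ∘ₗ leftMulLin (s := s) B := by
      refine LinearMap.ext fun X => ?_
      exact Matrix.mul_assoc A B X
    rw [this, LinearMap.det_comp, hA, hB, Matrix.det_mul, mul_pow]

def revf {l : ℕ} (i : Fin l) : Fin l := ⟨l - 1 - (i : ℕ), by have := i.2; omega⟩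

lemma revf_revf {l : ℕ} (i : Fin l) : revf (revf i) = i := by
  have := i.2; apply Fin.ext; simp [revf]; omega

lemma Kmat_transpose (l : ℕ) : (Kmat l)ᵀ = Kmat l := by
  ext i j
  show Kmat l j i = Kmat l i j
  unfold Kmat
  exact if_congr (by omega) rfl rfl

lemma Kmat_mul_apply {l : ℕ} (B : Matrix (Fin l) (Fin l) ℂ) (i j : Fin l) :
    (Kmat l * B) i j = B (revf i) j := by
  rw [Matrix.mul_apply, Finset.sum_eq_single (revf i)]
  · have := i.2
    show (if (i:ℕ) + _ = l - 1 then (1:ℂ) else 0) * _ = _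
    rw [if_pos (by simp [revf]; omega), one_mul]
  · intro b _ hb
    have hb' : (b : ℕ) ≠ l - 1 - (i : ℕ) := fun h => hb (Fin.ext (h.trans rfl))
    have := i.2; have := b.2
    show (if (i:ℕ) + (b:ℕ) = l - 1 then (1:ℂ) else 0) * _ = 0
    rw [if_neg (by omega), zero_mul]
  · intro h; exact absurd (Finset.mem_univ _) h

lemma mul_Kmat_apply {l : ℕ} (B : Matrix (Fin l) (Fin l) ℂ) (i j : Fin l) :
    (B * Kmat l) i j = B i (revf j) := by
  rw [Matrix.mul_apply, Finset.sum_eq_single (revf j)]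
  · have := j.2
    show _ * (if _ + (j:ℕ) = l - 1 then (1:ℂ) else 0) = _
    rw [if_pos (by simp [revf]; omega), mul_one]
  · intro b _ hb
    have hb' : (b : ℕ) ≠ l - 1 - (j : ℕ) := fun h => hb (Fin.ext (h.trans rfl))
    have := j.2; have := b.2
    show _ * (if (b:ℕ) + (j:ℕ) = l - 1 then (1:ℂ) else 0) = 0
    rw [if_neg (by omega), mul_zero]
  · intro h; exact absurd (Finset.mem_univ _) h

lemma Kmat_sq (l : ℕ) : Kmat l * Kmat l = 1 := by
  ext i j
  rw [Kmat_mul_apply]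
  have := i.2; have := j.2
  show (if (l - 1 - (i:ℕ)) + (j:ℕ) = l - 1 then (1:ℂ) else 0) = _
  rw [Matrix.one_apply]
  by_cases h : i = j
  · subst h; rw [if_pos (by omega), if_pos rfl]
  · rw [if_neg (fun hc => h (Fin.ext (by omega))), if_neg h]

lemma Kmat_Kmat {l : ℕ} (B : Matrix (Fin l) (Fin l) ℂ) : Kmat l * (Kmat l * B) = B := by
  rw [← Matrix.mul_assoc, Kmat_sq, Matrix.one_mul]

lemma mem_Wsub {l : ℕ} (B : Matrix (Fin l) (Fin l) ℂ) :
    B ∈ Wsub l ↔ Kmat l * B = Bᵀ * Kmat l := Iff.rfl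

lemma mem_Wsub_iff {l : ℕ} (B : Matrix (Fin l) (Fin l) ℂ) :
    B ∈ Wsub l ↔ ∀ p q, B (revf p) q = B (revf q) p := by
  rw [mem_Wsub]
  constructor
  · intro h p q
    have := congrFun (congrFun h p) q
    rwa [Kmat_mul_apply, mul_Kmat_apply, Matrix.transpose_apply] at this
  · intro h
    ext p q
    rw [Kmat_mul_apply, mul_Kmat_apply, Matrix.transpose_apply]
    exact h p q

lemma Wsub_apply_rev {l : ℕ} {B : Matrix (Fin l) (Fin l) ℂ} (hB : B ∈ Wsub l) (p q : Fin l) :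
    B p q = B (revf q) (revf p) := by
  have := (mem_Wsub_iff B).mp hB (revf p) q
  rwa [revf_revf] at this

noncomputable def psi (l : ℕ) (c : Matrix (Fin l) (Fin l) ℂ) : Wsub l →ₗ[ℂ] Wsub l where
  toFun G := ⟨Kmat l * cᵀ * Kmat l * (G : Matrix (Fin l) (Fin l) ℂ) * c, by
    rw [mem_Wsub]
    have hG : Kmat l * (G : Matrix (Fin l) (Fin l) ℂ)
        = (G : Matrix (Fin l) (Fin l) ℂ)ᵀ * Kmat l := G.2
    have key : Kmat l * ((G : Matrix (Fin l) (Fin l) ℂ) * c)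
        = (G : Matrix (Fin l) (Fin l) ℂ)ᵀ * (Kmat l * c) := by
      rw [← Matrix.mul_assoc, hG, Matrix.mul_assoc]
    simp only [Matrix.transpose_mul, Kmat_transpose, Matrix.transpose_transpose,
      Matrix.mul_assoc, Kmat_Kmat, Kmat_sq, Matrix.mul_one, key]⟩
  map_add' G H := Subtype.ext (by
    simp only [Submodule.coe_add, Matrix.mul_add, Matrix.add_mul])
  map_smul' t G := Subtype.ext (by
    simp only [Submodule.coe_smul, RingHom.id_apply, Matrix.mul_smul, Matrix.smul_mul])

lemma psi_coe {l : ℕ} (c : Matrix (Fin l) (Fin l) ℂ) (G : Wsub l) :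
    ((psi l c G : Wsub l) : Matrix (Fin l) (Fin l) ℂ)
      = Kmat l * cᵀ * Kmat l * (G : Matrix (Fin l) (Fin l) ℂ) * c := rfl

lemma psi_mul {l : ℕ} (A B : Matrix (Fin l) (Fin l) ℂ) :
    psi l (A * B) = (psi l B).comp (psi l A) := by
  refine LinearMap.ext fun G => Subtype.ext ?_
  rw [LinearMap.comp_apply, psi_coe, psi_coe, psi_coe]
  simp only [Matrix.transpose_mul, Matrix.mul_assoc, Kmat_Kmat]

abbrev Sidx (l : ℕ) := {x : Fin l × Fin l // (x.1 : ℕ) + (x.2 : ℕ) ≤ l - 1}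

noncomputable def wco (l : ℕ) : Wsub l ≃ₗ[ℂ] (Sidx l → ℂ) where
  toFun G s := (G : Matrix (Fin l) (Fin l) ℂ) s.1.1 s.1.2
  map_add' G H := by funext s; simp
  map_smul' t G := by funext s; simp
  invFun c := ⟨Matrix.of fun p q =>
      if h : (p : ℕ) + (q : ℕ) ≤ l - 1 then c ⟨(p, q), h⟩
      else c ⟨(revf q, revf p), by have := p.2; have := q.2; simp [revf]; omega⟩, by
    rw [mem_Wsub_iff]
    intro p q
    have hp := p.2; have hq := q.2
    have hrp : ((revf p : Fin l) : ℕ) = l - 1 - (p : ℕ) := rfl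
    have hrq : ((revf q : Fin l) : ℕ) = l - 1 - (q : ℕ) := rfl
    simp only [Matrix.of_apply]
    by_cases h1 : ((revf p : Fin l) : ℕ) + (q : ℕ) ≤ l - 1 <;>
      by_cases h2 : ((revf q : Fin l) : ℕ) + (p : ℕ) ≤ l - 1
    · rw [dif_pos h1, dif_pos h2]
      have : p = q := by apply Fin.ext; rw [hrp] at h1; rw [hrq] at h2; omega
      subst this; rfl
    · rw [dif_pos h1, dif_neg h2]
      exact congrArg c (Subtype.ext (Prod.ext rfl (revf_revf q).symm))
    · rw [dif_neg h1, dif_pos h2]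
      exact congrArg c (Subtype.ext (Prod.ext rfl (revf_revf p)))
    · exfalso; rw [hrp] at h1; rw [hrq] at h2; omega⟩
  left_inv G := by
    apply Subtype.ext
    ext p q
    simp only [Matrix.of_apply]
    by_cases h : (p : ℕ) + (q : ℕ) ≤ l - 1
    · rw [dif_pos h]
    · rw [dif_neg h]
      exact (Wsub_apply_rev G.2 p q).symm
  right_inv c := by
    funext s
    obtain ⟨⟨p, q⟩, hs⟩ := s
    simp only [Matrix.of_apply]
    rw [dif_pos hs]

lemma K_diag_K {l : ℕ} (δ : Fin l → ℂ) :
    Kmat l * Matrix.diagonal δ * Kmat l = Matrix.diagonal (fun i => δ (revf i)) := by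
  ext p q
  rw [mul_Kmat_apply, Kmat_mul_apply]
  by_cases h : p = q
  · subst h; simp [Matrix.diagonal_apply_eq]
  · have h' : revf p ≠ revf q := fun hc => h (by rw [← revf_revf p, hc, revf_revf])
    rw [Matrix.diagonal_apply_ne _ h', Matrix.diagonal_apply_ne _ h]

def swapEquiv (l : ℕ) : Sidx l ≃ {x : Fin l × Fin l // (x.2 : ℕ) ≤ (x.1 : ℕ)} where
  toFun s := ⟨(revf s.1.1, s.1.2), by
    have h := s.2; have := s.1.1.2; have := s.1.2.2
    show (s.1.2 : ℕ) ≤ l - 1 - s.1.1; omega⟩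
  invFun t := ⟨(revf t.1.1, t.1.2), by
    have h := t.2; have := t.1.1.2; have := t.1.2.2
    show (l - 1 - (t.1.1 : ℕ)) + (t.1.2 : ℕ) ≤ l - 1; omega⟩
  left_inv s := by obtain ⟨⟨x, y⟩, h⟩ := s; exact Subtype.ext (by simp [revf_revf])
  right_inv t := by obtain ⟨⟨x, y⟩, h⟩ := t; exact Subtype.ext (by simp [revf_revf])

theorem prod_weight {l : ℕ} (δ : Fin l → ℂ) :
    ∏ s : Sidx l, (δ (revf s.1.1) * δ s.1.2) = (∏ i, δ i) ^ (l + 1) := by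
  classical
  have hequiv : ∏ s : Sidx l, (δ (revf s.1.1) * δ s.1.2)
      = ∏ t : {x : Fin l × Fin l // (x.2 : ℕ) ≤ (x.1 : ℕ)}, (δ t.1.1 * δ t.1.2) :=
    Fintype.prod_equiv (swapEquiv l) _ _ (fun s => rfl)
  rw [hequiv]
  have hsub : ∏ t : {x : Fin l × Fin l // (x.2 : ℕ) ≤ (x.1 : ℕ)}, (δ t.1.1 * δ t.1.2)
      = ∏ x ∈ Finset.univ.filter (fun x : Fin l × Fin l => (x.2 : ℕ) ≤ (x.1 : ℕ)),
          (δ x.1 * δ x.2) :=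
    (Finset.prod_subtype (p := fun x : Fin l × Fin l => (x.2 : ℕ) ≤ (x.1 : ℕ))
      (Finset.univ.filter (fun x : Fin l × Fin l => (x.2 : ℕ) ≤ (x.1 : ℕ)))
      (fun x => by simp) (fun x => δ x.1 * δ x.2)).symm
  rw [hsub, Finset.prod_filter, Fintype.prod_prod_type]
  have step1 : ∀ i : Fin l, (∏ j : Fin l, if ((j : ℕ) ≤ (i : ℕ)) then δ i * δ j else 1)
      = δ i ^ ((i : ℕ) + 1) * ∏ j ∈ Finset.Iic i, δ j := by
    intro i
    rw [← Finset.prod_filter]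
    have hfil : Finset.filter (fun j : Fin l => (j : ℕ) ≤ (i : ℕ)) Finset.univ
        = Finset.Iic i := by
      ext x
      simp only [Finset.mem_filter, Finset.mem_univ, true_and, Finset.mem_Iic, Fin.le_def]
    rw [hfil, Finset.prod_mul_distrib, Finset.prod_const, Fin.card_Iic]
  simp only [step1]
  rw [Finset.prod_mul_distrib]
  have step2 : (∏ i : Fin l, ∏ j ∈ Finset.Iic i, δ j) = ∏ j : Fin l, δ j ^ (l - (j : ℕ)) := by
    rw [Finset.prod_comm' (t' := Finset.univ) (s' := fun j => Finset.Ici j)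
      (by intro x y; simp [Finset.mem_Iic, Finset.mem_Ici])]
    simp [Finset.prod_const, Fin.card_Ici]
  rw [step2, ← Finset.prod_mul_distrib]
  have step3 : ∀ i : Fin l, δ i ^ ((i : ℕ) + 1) * δ i ^ (l - (i : ℕ)) = δ i ^ (l + 1) := by
    intro i
    rw [← pow_add]
    congr 1
    have := i.2; omega
  simp only [step3]
  rw [Finset.prod_pow]

theorem det_psi_diagonal {l : ℕ} (δ : Fin l → ℂ) :
    LinearMap.det (psi l (Matrix.diagonal δ)) = (∏ i, δ i) ^ (l + 1) := by
  rw [← LinearMap.det_conj (psi l (Matrix.diagonal δ)) (wco l)]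
  rw [det_of_scaling (fun s : Sidx l => δ (revf s.1.1) * δ s.1.2) _ ?_, prod_weight]
  intro v s
  obtain ⟨⟨p, q⟩, hs⟩ := s
  simp only [LinearMap.comp_apply, LinearEquiv.coe_coe]
  show ((psi l (Matrix.diagonal δ) ((wco l).symm v) : Wsub l) : Matrix (Fin l) (Fin l) ℂ) p q = _
  rw [psi_coe, Matrix.diagonal_transpose]
  have hKdK : Kmat l * Matrix.diagonal δ * Kmat l
      * (((wco l).symm v : Wsub l) : Matrix (Fin l) (Fin l) ℂ) * Matrix.diagonal δ
      = Matrix.diagonal (fun i => δ (revf i))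
      * (((wco l).symm v : Wsub l) : Matrix (Fin l) (Fin l) ℂ) * Matrix.diagonal δ := by
    rw [K_diag_K]
  rw [hKdK, Matrix.mul_diagonal, Matrix.diagonal_mul]
  have hent : (((wco l).symm v : Wsub l) : Matrix (Fin l) (Fin l) ℂ) p q = v ⟨(p, q), hs⟩ := by
    show Matrix.of _ p q = _
    simp only [Matrix.of_apply]
    rw [dif_pos hs]
  rw [hent]
  ring

theorem det_psi_transvection {l : ℕ} (t : Matrix.TransvectionStruct (Fin l) ℂ) :
    LinearMap.det (psi l t.toMatrix) = 1 := by
  set E := Matrix.single t.i t.j t.c with hE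
  set u := Kmat l * Eᵀ * Kmat l with hu
  have hEE : E * E = 0 := Matrix.single_mul_single_of_ne (c := t.c) (i := t.i) (j := t.j) (k := t.i) (h := Ne.symm t.hij) (d := t.c)
  have huu : u * u = 0 := by
    rw [hu]
    simp only [Matrix.mul_assoc, Kmat_Kmat]
    rw [← Matrix.mul_assoc Eᵀ Eᵀ (Kmat l), ← Matrix.transpose_mul, hEE, Matrix.transpose_zero,
      Matrix.zero_mul, Matrix.mul_zero]
  have huu2 : ∀ B : Matrix (Fin l) (Fin l) ℂ, u * (u * B) = 0 := fun B => by
    rw [← Matrix.mul_assoc, huu, Matrix.zero_mul]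
  have hEE2 : ∀ B : Matrix (Fin l) (Fin l) ℂ, B * (E * E) = 0 := fun B => by
    rw [hEE, Matrix.mul_zero]
  set N := psi l t.toMatrix - LinearMap.id with hN
  have hNcoe : ∀ G : Wsub l, ((N G : Wsub l) : Matrix (Fin l) (Fin l) ℂ)
      = u * (G : Matrix (Fin l) (Fin l) ℂ) + (G : Matrix (Fin l) (Fin l) ℂ) * E
        + u * (G : Matrix (Fin l) (Fin l) ℂ) * E := by
    intro G
    have h1 : ((N G : Wsub l) : Matrix (Fin l) (Fin l) ℂ)
        = Kmat l * t.toMatrixᵀ * Kmat l * (G : Matrix (Fin l) (Fin l) ℂ) * t.toMatrix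
          - (G : Matrix (Fin l) (Fin l) ℂ) := by
      rw [hN]
      simp only [LinearMap.sub_apply, LinearMap.id_apply]
      rw [Submodule.coe_sub, psi_coe]
    rw [h1]
    have h2 : t.toMatrix = 1 + E := rfl
    rw [h2, Matrix.transpose_add, Matrix.transpose_one]
    have h3 : Kmat l * (1 + Eᵀ) * Kmat l = 1 + u := by
      rw [Matrix.mul_add, Matrix.mul_one, Matrix.add_mul, Kmat_sq, hu]
    rw [h3]
    noncomm_ring
  have hN3 : N ^ 3 = 0 := by
    refine LinearMap.ext fun G => Subtype.ext ?_
    have happ : (N ^ 3) G = N (N (N G)) := by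
      rw [pow_succ, pow_succ, pow_one]
      simp only [Module.End.mul_apply]
    rw [happ]
    simp only [hNcoe, Matrix.mul_add, Matrix.add_mul, Matrix.mul_assoc, huu2, hEE2,
      Matrix.mul_zero, Matrix.zero_mul, zero_add, add_zero,
      ZeroMemClass.coe_zero, LinearMap.zero_apply]
  have hsplit : psi l t.toMatrix = LinearMap.id + N := by rw [hN]; abel
  rw [hsplit, linmap_det_one_add_of_isNilpotent N ⟨3, hN3⟩]

theorem det_psi {l : ℕ} (c : Matrix (Fin l) (Fin l) ℂ) (hc : c.det ≠ 0) :
    LinearMap.det (psi l c) = c.det ^ (l + 1) := by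
  apply Matrix.diagonal_transvection_induction_of_det_ne_zero
    (fun A => LinearMap.det (psi l A) = A.det ^ (l + 1)) c hc
  · intro δ _
    rw [det_psi_diagonal δ, Matrix.det_diagonal]
  · intro t
    rw [det_psi_transvection t, Matrix.TransvectionStruct.det, one_pow]
  · intro A B _ _ hA hB
    rw [psi_mul, LinearMap.det_comp, hA, hB, Matrix.det_mul, mul_pow, mul_comm]

lemma Mmat_sq {m : ℕ} (hm : m % 2 = 0) : Mmat m * Mmat m = -1 := by
  ext i k
  have hi := i.2; have hk := k.2
  have hr : ((revf i : Fin m) : ℕ) = m - 1 - (i : ℕ) := rfl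
  rw [Matrix.mul_apply, Finset.sum_eq_single (revf i)]
  · show Mmat m i (revf i) * Mmat m (revf i) k = _
    unfold Mmat
    rw [Matrix.neg_apply, Matrix.one_apply]
    rw [if_pos (show (i : ℕ) + ((revf i : Fin m) : ℕ) = m - 1 by rw [hr]; omega)]
    by_cases h : i = k
    · subst h
      rw [if_pos (show ((revf i : Fin m) : ℕ) + (i : ℕ) = m - 1 by rw [hr]; omega), if_pos rfl]
      by_cases h2 : 2 * (i : ℕ) < m
      · rw [if_pos h2, if_neg (show ¬(2 * ((revf i : Fin m) : ℕ) < m) by rw [hr]; omega)]; ring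
      · rw [if_neg h2, if_pos (show 2 * ((revf i : Fin m) : ℕ) < m by rw [hr]; omega)]; ring
    · have h' : (i : ℕ) ≠ (k : ℕ) := fun hc => h (Fin.ext hc)
      rw [if_neg (show ¬(((revf i : Fin m) : ℕ) + (k : ℕ) = m - 1) by rw [hr]; omega),
        mul_zero, if_neg h, neg_zero]
  · intro b _ hb
    have hb' : (b : ℕ) ≠ m - 1 - (i : ℕ) := fun hc => hb (Fin.ext hc)
    have := b.2
    show Mmat m i b * Mmat m b k = 0
    unfold Mmat
    rw [if_neg (show ¬((i : ℕ) + (b : ℕ) = m - 1) by omega), zero_mul]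
  · intro hmem; exact absurd (Finset.mem_univ _) hmem


/-- In `Sp(2n, ℂ)` (defined by the antidiagonal symplectic form `M_{2n}`),
let `P_I` be the standard maximal parabolic corresponding to an isotropic subspace of
dimension `l` (`1 ≤ l ≤ n`).  The quotient `Lie(Sp(2n,ℂ))/Lie(P_I)` is identified with
`Mat((2n-2l)×l, ℂ) ⊕ W`, `W = {B : K_l B = Bᵀ K_l}`, and the adjoint action of an element
`M_{a,b,c,d}` of `P_I` with Levi data `a ∈ GL(l,ℂ)`, `d ∈ Sp(2n-2l,ℂ)` sends `(D, G)` to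
`(d D a⁻¹ - M_{2n-2l} (d⁻¹)ᵀ bᵀ (a⁻¹)ᵀ K_l G a⁻¹, K_l (a⁻¹)ᵀ K_l G a⁻¹)`.  Its determinant
equals `det(a)^{-(2n-2l)} · det(d)^l · det(a)^{-(l+1)}`; in particular, in the Lagrangian
case `l = n` it equals `det(a)^{-(n+1)}`. -/
theorem det_adjoint_action_symplectic_parabolic
    (n l : ℕ) (hl : 1 ≤ l) (hln : l ≤ n)
    (a : Matrix (Fin l) (Fin l) ℂ) (ha : IsUnit a.det)
    (b : Matrix (Fin l) (Fin (2 * n - 2 * l)) ℂ)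
    (d : Matrix (Fin (2 * n - 2 * l)) (Fin (2 * n - 2 * l)) ℂ)
    (hd : dᵀ * Mmat (2 * n - 2 * l) * d = Mmat (2 * n - 2 * l))
    (f : (Matrix (Fin (2 * n - 2 * l)) (Fin l) ℂ × Wsub l) →ₗ[ℂ]
         (Matrix (Fin (2 * n - 2 * l)) (Fin l) ℂ × Wsub l))
    (hf : ∀ (D : Matrix (Fin (2 * n - 2 * l)) (Fin l) ℂ) (G : Wsub l),
      (f (D, G)).1 =
        d * D * a⁻¹ -
          Mmat (2 * n - 2 * l) * (d⁻¹)ᵀ * bᵀ * (a⁻¹)ᵀ * Kmat l *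
            (G : Matrix (Fin l) (Fin l) ℂ) * a⁻¹ ∧
      (((f (D, G)).2 : Matrix (Fin l) (Fin l) ℂ)) =
        Kmat l * (a⁻¹)ᵀ * Kmat l * (G : Matrix (Fin l) (Fin l) ℂ) * a⁻¹) :
    LinearMap.det f = (a.det)⁻¹ ^ (2 * n - 2 * l) * d.det ^ l * (a.det)⁻¹ ^ (l + 1) ∧
    (l = n → LinearMap.det f = (a.det)⁻¹ ^ (n + 1)) := by
  have hMdet : (Mmat (2 * n - 2 * l)).det ≠ 0 := by
    intro h0
    have h1 := congrArg Matrix.det (Mmat_sq (m := 2 * n - 2 * l) (by omega))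
    rw [Matrix.det_mul, h0, mul_zero] at h1
    have hne : ((-1 : Matrix (Fin (2 * n - 2 * l)) (Fin (2 * n - 2 * l)) ℂ)).det ≠ 0 := by
      rw [show (-1 : Matrix (Fin (2 * n - 2 * l)) (Fin (2 * n - 2 * l)) ℂ)
          = -(1 : Matrix (Fin (2 * n - 2 * l)) (Fin (2 * n - 2 * l)) ℂ) from rfl,
        Matrix.det_neg, Matrix.det_one, mul_one]
      exact pow_ne_zero _ (by norm_num)
    exact hne h1.symm
  have hddet : d.det ≠ 0 := by
    intro h0
    have h1 := congrArg Matrix.det hd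
    rw [Matrix.det_mul, Matrix.det_mul, Matrix.det_transpose, h0, mul_zero] at h1
    exact hMdet h1.symm
  have hadet : a.det ≠ 0 := ha.ne_zero
  have hainv : (a⁻¹).det = (a.det)⁻¹ := by
    rw [Matrix.det_nonsing_inv, Ring.inverse_eq_inv]
  have hainvne : (a⁻¹).det ≠ 0 := by rw [hainv]; exact inv_ne_zero hadet
  have hf0 : ∀ D : Matrix (Fin (2 * n - 2 * l)) (Fin l) ℂ, (f (D, 0)).2 = 0 := by
    intro D
    have h := (hf D 0).2
    rw [ZeroMemClass.coe_zero, Matrix.mul_zero, Matrix.zero_mul] at h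
    exact Subtype.ext (h.trans (ZeroMemClass.coe_zero _).symm)
  rw [det_triangular f hf0]
  have hg : (LinearMap.fst ℂ (Matrix (Fin (2 * n - 2 * l)) (Fin l) ℂ) (Wsub l) ∘ₗ f ∘ₗ
      LinearMap.inl ℂ (Matrix (Fin (2 * n - 2 * l)) (Fin l) ℂ) (Wsub l))
      = rightMulLin (r := 2 * n - 2 * l) a⁻¹ ∘ₗ leftMulLin (s := l) d := by
    refine LinearMap.ext fun D => ?_
    have h := (hf D 0).1
    rw [ZeroMemClass.coe_zero, Matrix.mul_zero, Matrix.zero_mul, sub_zero] at h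
    show (f (D, 0)).1 = d * D * a⁻¹
    exact h
  have hk : (LinearMap.snd ℂ (Matrix (Fin (2 * n - 2 * l)) (Fin l) ℂ) (Wsub l) ∘ₗ f ∘ₗ
      LinearMap.inr ℂ (Matrix (Fin (2 * n - 2 * l)) (Fin l) ℂ) (Wsub l)) = psi l a⁻¹ := by
    refine LinearMap.ext fun G => Subtype.ext ?_
    have h := (hf 0 G).2
    rw [psi_coe]
    exact h
  rw [hg, hk, LinearMap.det_comp, det_rightMulLin a⁻¹ hainvne, det_leftMulLin d hddet,
    det_psi a⁻¹ hainvne, hainv]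
  constructor
  · rfl
  · intro hleq
    subst hleq
    have hm0 : 2 * l - 2 * l = 0 := by omega
    have hd1 : d.det = 1 := by
      have : IsEmpty (Fin (2 * l - 2 * l)) := by rw [hm0]; infer_instance
      exact Matrix.det_isEmpty
    rw [hd1, one_pow, hm0, pow_zero, one_mul, one_mul]
end

section
/- The linear endomorphism of the space of skew-symmetric l×l complex matrices given by S ↦ (a^{-1})^T S a^{-1}, for a ∈ GL(l,ℂ), has determinant det(a)^{-(l-1)}. -/
open Matrix

/-- The subspace of skew-symmetric `l × l` complex matrices. -/
noncomputable def SkewSub (l : ℕ) : Submodule ℂ (Matrix (Fin l) (Fin l) ℂ) where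
  carrier := {S | Sᵀ = -S}
  add_mem' := by
    intro a b ha hb
    simp only [Set.mem_setOf_eq] at *
    rw [Matrix.transpose_add, ha, hb, neg_add]
  zero_mem' := by simp
  smul_mem' := by
    intro c a ha
    simp only [Set.mem_setOf_eq] at *
    rw [Matrix.transpose_smul, ha, smul_neg]

namespace SkewAux

variable {l : ℕ}

lemma mem_iff {S : Matrix (Fin l) (Fin l) ℂ} : S ∈ SkewSub l ↔ Sᵀ = -S := Iff.rfl

lemma skew_apply_apply {S : Matrix (Fin l) (Fin l) ℂ} (hS : Sᵀ = -S) (i j : Fin l) :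
    S j i = -S i j := by
  have := congrFun (congrFun hS i) j
  simpa [Matrix.transpose_apply] using this

lemma skew_diag {S : Matrix (Fin l) (Fin l) ℂ} (hS : Sᵀ = -S) (i : Fin l) : S i i = 0 := by
  have := skew_apply_apply hS i i
  linear_combination this / 2

/-- Congruence map `S ↦ bᵀ S b` on skew matrices. -/
noncomputable def congrMap (b : Matrix (Fin l) (Fin l) ℂ) : SkewSub l →ₗ[ℂ] SkewSub l where
  toFun S := ⟨bᵀ * (S : Matrix (Fin l) (Fin l) ℂ) * b, by
    have hS := mem_iff.mp S.2
    simp [mem_iff, Matrix.transpose_mul, Matrix.mul_assoc, hS]⟩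
  map_add' S T := by
    ext : 1
    simp [Matrix.mul_add, Matrix.add_mul]
  map_smul' c S := by
    ext : 1
    simp [Matrix.mul_smul, Matrix.smul_mul]

@[simp] lemma congrMap_coe (b : Matrix (Fin l) (Fin l) ℂ) (S : SkewSub l) :
    (congrMap b S : Matrix (Fin l) (Fin l) ℂ) = bᵀ * (S : Matrix (Fin l) (Fin l) ℂ) * b := rfl

lemma congrMap_mul (M N : Matrix (Fin l) (Fin l) ℂ) :
    congrMap (M * N) = (congrMap N).comp (congrMap M) := by
  ext S : 2
  simp [Matrix.transpose_mul, Matrix.mul_assoc]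

abbrev Idx (l : ℕ) := {p : Fin l × Fin l // p.1 < p.2}

noncomputable def fromFun (v : Idx l → ℂ) : Matrix (Fin l) (Fin l) ℂ :=
  Matrix.of fun i j =>
    if h : i < j then v ⟨(i, j), h⟩ else if h' : j < i then -v ⟨(j, i), h'⟩ else 0

lemma fromFun_apply_lt (v : Idx l → ℂ) {i j : Fin l} (h : i < j) :
    fromFun v i j = v ⟨(i, j), h⟩ := by simp [fromFun, h]

lemma fromFun_skew (v : Idx l → ℂ) : (fromFun v)ᵀ = -(fromFun v) := by
  ext i j
  simp only [Matrix.transpose_apply, Matrix.neg_apply, fromFun, Matrix.of_apply]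
  rcases lt_trichotomy i j with h | h | h
  · simp [h, asymm h]
  · subst h; simp
  · simp [h, asymm h]

lemma fromFun_add (v w : Idx l → ℂ) : fromFun (v + w) = fromFun v + fromFun w := by
  ext i j
  simp only [fromFun, Matrix.of_apply, Matrix.add_apply, Pi.add_apply]
  split_ifs <;> ring

lemma fromFun_smul (c : ℂ) (v : Idx l → ℂ) : fromFun (c • v) = c • fromFun v := by
  ext i j
  simp only [fromFun, Matrix.of_apply, Matrix.smul_apply, Pi.smul_apply, smul_eq_mul]
  split_ifs <;> ring

lemma fromFun_toFun {S : Matrix (Fin l) (Fin l) ℂ} (hS : Sᵀ = -S) :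
    fromFun (fun p : Idx l => S p.1.1 p.1.2) = S := by
  ext i j
  simp only [fromFun, Matrix.of_apply]
  rcases lt_trichotomy i j with h | h | h
  · simp [h]
  · subst h; simp [skew_diag hS, lt_irrefl]
  · rw [dif_neg (asymm h), dif_pos h, skew_apply_apply hS]; ring

/-- The linear equivalence between skew matrices and functions on the index set. -/
noncomputable def skewEquiv (l : ℕ) : (Idx l → ℂ) ≃ₗ[ℂ] SkewSub l where
  toFun v := ⟨fromFun v, fromFun_skew v⟩
  map_add' v w := by ext : 1; exact fromFun_add v w
  map_smul' c v := by ext : 1; exact fromFun_smul c v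
  invFun S p := (S : Matrix (Fin l) (Fin l) ℂ) p.1.1 p.1.2
  left_inv v := by
    funext p
    exact fromFun_apply_lt v p.2
  right_inv S := by
    ext : 1
    exact fromFun_toFun S.2

noncomputable def skewBasis (l : ℕ) : Module.Basis (Idx l) ℂ (SkewSub l) :=
  (Pi.basisFun ℂ (Idx l)).map (skewEquiv l)

lemma skewBasis_coe (p : Idx l) :
    (skewBasis l p : Matrix (Fin l) (Fin l) ℂ) = fromFun (Pi.single p 1) := by
  simp [skewBasis, skewEquiv]

end SkewAux

section DetHelpers

variable {K : Type*} [Field K] {V : Type*} [AddCommGroup V] [Module K V]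

lemma det_of_eigenbasis {ι : Type*} [Fintype ι] [DecidableEq ι]
    (b : Module.Basis ι K V) (f : V →ₗ[K] V) (c : ι → K) (h : ∀ i, f (b i) = c i • b i) :
    LinearMap.det f = ∏ i, c i := by
  rw [← LinearMap.det_toMatrix b]
  have : LinearMap.toMatrix b b f = Matrix.diagonal c := by
    ext i j
    rw [LinearMap.toMatrix_apply, h j, _root_.map_smul, Module.Basis.repr_self]
    by_cases hij : i = j
    · subst hij; simp
    · simp [Matrix.diagonal_apply_ne _ hij, Finsupp.single_apply, Ne.symm hij, hij]
  rw [this, Matrix.det_diagonal]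

/-- det (1 + M) = 1 when M * M = 0. -/
lemma det_one_add_of_sq_zero {n : Type*} [Fintype n] [DecidableEq n]
    (M : Matrix n n ℂ) (h : M * M = 0) : Matrix.det (1 + M) = 1 := by
  have hnil : IsNilpotent M := ⟨2, by rwa [pow_two]⟩
  have hu := Matrix.isUnit_charpolyRev_of_isNilpotent hnil
  obtain ⟨r, hr, hCr⟩ := Polynomial.isUnit_iff.mp hu
  have h0 : Polynomial.eval 0 M.charpolyRev = 1 := Matrix.eval_charpolyRev
  have hr1 : r = 1 := by
    have := congrArg (Polynomial.eval 0) hCr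
    simpa [h0] using this
  have hcp : M.charpolyRev = 1 := by rw [← hCr, hr1]; simp
  have h2 := congrArg (Polynomial.eval (-1)) hcp
  rw [Matrix.charpolyRev, ← Polynomial.coe_evalRingHom, RingHom.map_det,
    RingHom.mapMatrix_apply] at h2
  have hmap : (1 - (Polynomial.X : Polynomial ℂ) • M.map Polynomial.C).map
      (Polynomial.evalRingHom (-1)) = 1 + M := by
    ext i j
    rcases eq_or_ne i j with hij | hij <;>
      simp [hij, Matrix.one_apply, Matrix.map_apply]
  rw [hmap] at h2
  simpa using h2

lemma prod_pairs_lt {l : ℕ} (d : Fin l → ℂ) :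
    ∏ p : {p : Fin l × Fin l // p.1 < p.2}, (d p.1.1 * d p.1.2) = (∏ i, d i) ^ (l - 1) := by
  classical
  have h0 : ∏ p : {p : Fin l × Fin l // p.1 < p.2}, (d p.1.1 * d p.1.2)
      = ∏ p ∈ Finset.univ.filter (fun p : Fin l × Fin l => p.1 < p.2), (d p.1 * d p.2) :=
    (Finset.prod_subtype (p := fun p : Fin l × Fin l => p.1 < p.2)
      (Finset.univ.filter (fun p : Fin l × Fin l => p.1 < p.2))
      (fun x => by simp) (fun p => d p.1 * d p.2)).symm
  rw [h0, Finset.prod_filter]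
  have step : ∀ p : Fin l × Fin l,
      (if p.1 < p.2 then d p.1 * d p.2 else 1) =
        (if p.1 < p.2 then d p.1 else 1) * (if p.1 < p.2 then d p.2 else 1) := by
    intro p; split_ifs <;> simp
  rw [Finset.prod_congr rfl (fun p _ => step p), Finset.prod_mul_distrib]
  have hA : ∏ p : Fin l × Fin l, (if p.1 < p.2 then d p.1 else 1)
      = ∏ i, d i ^ (Finset.Ioi i).card := by
    rw [Fintype.prod_prod_type]
    refine Finset.prod_congr rfl fun i _ => ?_
    rw [← Finset.prod_filter]
    have he : Finset.univ.filter (fun j : Fin l => i < j) = Finset.Ioi i := by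
      ext j; simp
    rw [he]; simp [Finset.prod_const]
  have hB : ∏ p : Fin l × Fin l, (if p.1 < p.2 then d p.2 else 1)
      = ∏ i, d i ^ (Finset.Iio i).card := by
    rw [← Equiv.prodComm (Fin l) (Fin l) |>.prod_comp
      (fun p : Fin l × Fin l => if p.1 < p.2 then d p.2 else 1)]
    rw [Fintype.prod_prod_type]
    refine Finset.prod_congr rfl fun i _ => ?_
    simp only [Equiv.prodComm_apply, Prod.swap_prod_mk]
    show (∏ y, if y < i then d i else 1) = _
    rw [← Finset.prod_filter]
    have he : Finset.univ.filter (fun j : Fin l => j < i) = Finset.Iio i := by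
      ext j; simp
    rw [he]; simp [Finset.prod_const]
  rw [hA, hB, ← Finset.prod_mul_distrib]
  have hcomb : ∀ i : Fin l,
      d i ^ (Finset.Ioi i).card * d i ^ (Finset.Iio i).card = d i ^ (l - 1) := by
    intro i
    rw [← pow_add, Fin.card_Ioi, Fin.card_Iio]
    congr 1
    omega
  rw [Finset.prod_congr rfl (fun i _ => hcomb i), Finset.prod_pow]

end DetHelpers

namespace SkewAux

variable {l : ℕ}

/-- The diagonal case. -/
lemma det_congrMap_diagonal (D : Fin l → ℂ) :
    LinearMap.det (congrMap (Matrix.diagonal D)) = (Matrix.det (Matrix.diagonal D)) ^ (l - 1) := by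
  have h : ∀ p : Idx l, congrMap (Matrix.diagonal D) (skewBasis l p)
      = (D p.1.1 * D p.1.2) • skewBasis l p := by
    intro p
    ext : 1
    push_cast [congrMap_coe, skewBasis_coe]
    ext i j
    simp only [Matrix.diagonal_transpose, Matrix.mul_diagonal, Matrix.diagonal_mul,
      Matrix.smul_apply, smul_eq_mul]
    simp only [fromFun, Matrix.of_apply]
    rcases lt_trichotomy i j with hij | hij | hij
    · rw [dif_pos hij]
      rcases eq_or_ne (⟨(i, j), hij⟩ : Idx l) p with he | he
      · have h1 : p.1.1 = i := by rw [← he]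
        have h2 : p.1.2 = j := by rw [← he]
        rw [he, Pi.single_eq_same, h1, h2]; ring
      · rw [Pi.single_eq_of_ne he]; ring
    · subst hij; simp [lt_irrefl]
    · rw [dif_neg (asymm hij), dif_pos hij]
      rcases eq_or_ne (⟨(j, i), hij⟩ : Idx l) p with he | he
      · have h1 : p.1.1 = j := by rw [← he]
        have h2 : p.1.2 = i := by rw [← he]
        rw [he, Pi.single_eq_same, h1, h2]; ring
      · rw [Pi.single_eq_of_ne he]; ring
  rw [det_of_eigenbasis (skewBasis l) _ _ h, Matrix.det_diagonal, prod_pairs_lt]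

lemma transpose_stdBasisMatrix (i j : Fin l) (c : ℂ) :
    (Matrix.single i j c)ᵀ = Matrix.single j i c := by
  ext a b
  simp [Matrix.single, and_comm]

/-- The transvection case. -/
lemma det_congrMap_transvection (t : Matrix.TransvectionStruct (Fin l) ℂ) :
    LinearMap.det (congrMap t.toMatrix) = 1 := by
  obtain ⟨i, j, hij, c⟩ := t
  set A := Matrix.single j i c with hA
  set B := Matrix.single i j c with hB
  -- key zero facts
  have fact1 : ∀ S : Matrix (Fin l) (Fin l) ℂ, Sᵀ = -S → A * S * B = 0 := by
    intro S hS
    have hdiag : S i i = 0 := skew_diag hS i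
    rw [hA, hB]
    ext a b
    rcases eq_or_ne b j with hb | hbj
    · rcases eq_or_ne a j with ha | haj
      · rw [hb, ha]
        simp [hdiag]
      · rw [hb]
        simp [haj]
    · simp [hbj]
  have fact2 : A * A = 0 := by
    rw [hA]
    simp [hij]
  have fact3 : B * B = 0 := by
    rw [hB]
    simp [hij.symm]
  -- the nilpotent part
  have hmemN : ∀ S : SkewSub l,
      A * (S : Matrix (Fin l) (Fin l) ℂ) + (S : Matrix (Fin l) (Fin l) ℂ) * B ∈ SkewSub l := by
    intro S
    have hS := mem_iff.mp S.2
    rw [mem_iff, Matrix.transpose_add, Matrix.transpose_mul, Matrix.transpose_mul,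
      hA, hB, transpose_stdBasisMatrix, transpose_stdBasisMatrix, hS]
    simp only [Matrix.neg_mul, Matrix.mul_neg, neg_add]
    rw [add_comm]
  set N : SkewSub l →ₗ[ℂ] SkewSub l :=
    { toFun := fun S => ⟨A * (S : Matrix (Fin l) (Fin l) ℂ) + (S : Matrix (Fin l) (Fin l) ℂ) * B,
        hmemN S⟩
      map_add' := by
        intro S T
        ext : 1
        push_cast
        simp only [Submodule.coe_add, Matrix.mul_add, Matrix.add_mul]
        abel
      map_smul' := by
        intro r S
        ext : 1
        push_cast
        simp [Matrix.mul_smul, Matrix.smul_mul, smul_add] } with hN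
  have hNcoe : ∀ S : SkewSub l, (N S : Matrix (Fin l) (Fin l) ℂ)
      = A * (S : Matrix (Fin l) (Fin l) ℂ) + (S : Matrix (Fin l) (Fin l) ℂ) * B := fun _ => rfl
  have hNN : N.comp N = 0 := by
    ext S : 2
    rw [LinearMap.comp_apply, LinearMap.zero_apply]
    ext : 1
    rw [hNcoe, hNcoe]
    have hS := mem_iff.mp S.2
    have e1 : A * (A * (S : Matrix (Fin l) (Fin l) ℂ)) = 0 := by
      rw [← Matrix.mul_assoc, fact2, Matrix.zero_mul]
    have e2 : A * ((S : Matrix (Fin l) (Fin l) ℂ) * B) = 0 := by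
      rw [← Matrix.mul_assoc, fact1 _ hS]
    have e3 : A * (S : Matrix (Fin l) (Fin l) ℂ) * B = 0 := fact1 _ hS
    have e4 : (S : Matrix (Fin l) (Fin l) ℂ) * B * B = 0 := by
      rw [Matrix.mul_assoc, fact3, Matrix.mul_zero]
    rw [Matrix.mul_add, Matrix.add_mul, e1, e2, e3, e4]
    simp
  have hdecomp : congrMap (Matrix.TransvectionStruct.toMatrix ⟨i, j, hij, c⟩)
      = LinearMap.id + N := by
    ext S : 2
    rw [LinearMap.add_apply, LinearMap.id_apply]
    ext : 1
    rw [Submodule.coe_add, congrMap_coe, hNcoe]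
    rw [Matrix.TransvectionStruct.toMatrix_mk, Matrix.transvection, Matrix.transpose_add,
      Matrix.transpose_one, transpose_stdBasisMatrix, ← hA, ← hB]
    have hS := mem_iff.mp S.2
    simp only [Matrix.add_mul, Matrix.mul_add, Matrix.one_mul, Matrix.mul_one]
    rw [fact1 _ hS]
    simp only [Matrix.add_apply, Matrix.zero_apply]
    ring
  rw [hdecomp]
  -- pass to matrices
  set b := skewBasis l
  rw [← LinearMap.det_toMatrix b]
  have hM : LinearMap.toMatrix b b (LinearMap.id + N) = 1 + LinearMap.toMatrix b b N := by
    rw [LinearEquiv.map_add, LinearMap.toMatrix_id]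
  rw [hM]
  apply det_one_add_of_sq_zero
  have : LinearMap.toMatrix b b N * LinearMap.toMatrix b b N
      = LinearMap.toMatrix b b (N.comp N) := (LinearMap.toMatrix_comp b b b N N).symm
  rw [this, hNN, LinearEquiv.map_zero]

/-- The main computation for any invertible matrix. -/
lemma det_congrMap (M : Matrix (Fin l) (Fin l) ℂ) (hM : M.det ≠ 0) :
    LinearMap.det (congrMap M) = M.det ^ (l - 1) := by
  apply Matrix.diagonal_transvection_induction_of_det_ne_zero
    (P := fun M => LinearMap.det (congrMap M) = M.det ^ (l - 1)) M hM
  · intro D _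
    exact det_congrMap_diagonal D
  · intro t
    rw [det_congrMap_transvection, Matrix.TransvectionStruct.det, one_pow]
  · intro P Q hPd hQd hP hQ
    rw [congrMap_mul, LinearMap.det_comp, hP, hQ, Matrix.det_mul, mul_pow]
    ring

end SkewAux

/-- For `a ∈ GL(l, ℂ)`, the linear endomorphism of the space of
skew-symmetric `l × l` complex matrices given by `S ↦ (a⁻¹)ᵀ S a⁻¹` has determinant
`det(a)^{-(l-1)}`. -/
theorem det_congr_action_on_skew (l : ℕ)
    (a : Matrix (Fin l) (Fin l) ℂ) (ha : IsUnit a.det)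
    (f : (SkewSub l) →ₗ[ℂ] (SkewSub l))
    (hf : ∀ S : SkewSub l,
      ((f S : Matrix (Fin l) (Fin l) ℂ)) =
        (a⁻¹)ᵀ * (S : Matrix (Fin l) (Fin l) ℂ) * a⁻¹) :
    LinearMap.det f = (a.det)⁻¹ ^ (l - 1) := by
  have hdet : a.det ≠ 0 := ha.ne_zero
  have hfeq : f = SkewAux.congrMap a⁻¹ := by
    ext S : 2
    exact (hf S).trans (SkewAux.congrMap_coe a⁻¹ S).symm
  have hinvdet : (a⁻¹).det = a.det⁻¹ := by
    rw [Matrix.det_nonsing_inv, Ring.inverse_eq_inv']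
  have hinvne : (a⁻¹).det ≠ 0 := by
    rw [hinvdet]
    exact inv_ne_zero hdet
  rw [hfeq, SkewAux.det_congrMap a⁻¹ hinvne, hinvdet]
end
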